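/- Fix integers k ≥ 3 and n ≥ 2 and a real number L ≥ max(1, n−1), and let S be the star with k edges of length L. Let c ⊆ S be a regular (n−1)-element configuration. Then for each index i with 0 ≤ i < k there exists a unique point x on the i-th edge of S such that x ∉ c and {x} ∪ c is a regular n-element configuration. -/

import Mathlib

open Set Metric

private lemma my_le_infDist {α : Type*} [PseudoMetricSpace α] {s : Set α} {x : α} {b : ℝ}
    (hs : s.Nonempty) (h : ∀ y ∈ s, b ≤ dist x y) : b ≤ Metric.infDist x s := by
  by_contra hlt
  push_neg at hlt
  obtain ⟨y, hy, hd⟩ := (Metric.infDist_lt_iff hs).1 hlt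
  exact absurd (h y hy) (not_le.2 hd)

private lemma grid_step (T : Finset ℝ) (hT : T.Nonempty)
    (hgap : ∀ s ∈ T, ∀ t ∈ T, s < t → (∀ u ∈ T, ¬(s < u ∧ u < t)) → t - s = 1)
    {t : ℝ} (ht : t ∈ T) (hlt : t < T.max' hT) : t + 1 ∈ T := by
  classical
  set U := T.filter (fun u => t < u) with hU
  have hUne : U.Nonempty := ⟨T.max' hT, by simp [hU, Finset.mem_filter, T.max'_mem hT, hlt]⟩
  set t' := U.min' hUne with ht'
  have hmem : t' ∈ U := U.min'_mem hUne
  have ht'T : t' ∈ T := (Finset.mem_filter.1 hmem).1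
  have htt' : t < t' := (Finset.mem_filter.1 hmem).2
  have h1 : t' - t = 1 := by
    apply hgap t ht t' ht'T htt'
    rintro u hu ⟨hh1, hh2⟩
    exact absurd (U.min'_le u (Finset.mem_filter.2 ⟨hu, hh1⟩)) (not_le.2 hh2)
  have : t + 1 = t' := by linarith
  rwa [this]

private lemma grid_mem (T : Finset ℝ) (hT : T.Nonempty)
    (hgap : ∀ s ∈ T, ∀ t ∈ T, s < t → (∀ u ∈ T, ¬(s < u ∧ u < t)) → t - s = 1) :
    ∀ j : ℕ, T.min' hT + j ≤ T.max' hT → T.min' hT + j ∈ T := by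
  intro j
  induction j with
  | zero => intro _; simpa using T.min'_mem hT
  | succ j ih =>
    intro hle
    have hcast : ((j+1 : ℕ) : ℝ) = (j : ℝ) + 1 := by push_cast; ring
    rw [hcast] at hle
    have h1 : T.min' hT + j ≤ T.max' hT := by linarith
    have h2 : T.min' hT + j < T.max' hT := by linarith
    have := grid_step T hT hgap (ih h1) h2
    rw [hcast]
    convert this using 1
    ring

private lemma grid_max (T : Finset ℝ) (hT : T.Nonempty)
    (hgap : ∀ s ∈ T, ∀ t ∈ T, s < t → (∀ u ∈ T, ¬(s < u ∧ u < t)) → t - s = 1) :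
    ∃ j : ℕ, T.max' hT = T.min' hT + j ∧ j + 1 ≤ T.card := by
  classical
  set a := T.min' hT with ha
  set b := T.max' hT with hb
  have hab : a ≤ b := T.min'_le _ (T.max'_mem hT)
  set j := ⌊b - a⌋₊ with hj
  have hj1 : (j : ℝ) ≤ b - a := Nat.floor_le (by linarith)
  have hmem : a + j ∈ T := grid_mem T hT hgap j (by linarith)
  have hbj : b = a + j := by
    by_contra h
    have hlt : a + j < b := lt_of_le_of_ne (by linarith) (fun hh => h hh.symm)
    have h2 := grid_step T hT hgap hmem hlt
    have hle : a + j + 1 ≤ b := T.le_max' _ h2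
    have : (j + 1 : ℕ) ≤ ⌊b - a⌋₊ := Nat.le_floor (by push_cast; linarith)
    omega
  refine ⟨j, hbj, ?_⟩
  have hcard : (Finset.range (j+1)).card ≤ T.card := by
    apply Finset.card_le_card_of_injOn (fun m : ℕ => a + m)
    · intro m hm
      have hm' : m ≤ j := by simpa [Nat.lt_succ_iff] using hm
      have hm'' : (m : ℝ) ≤ j := by exact_mod_cast hm'
      exact grid_mem T hT hgap m (by linarith)
    · intro m _ m' _ h
      have : (m : ℝ) = m' := by
        have := add_left_cancel h
        exact_mod_cast this
      exact_mod_cast this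
  simpa using hcard

private lemma grid_near (T : Finset ℝ) (hT : T.Nonempty)
    (hgap : ∀ s ∈ T, ∀ t ∈ T, s < t → (∀ u ∈ T, ¬(s < u ∧ u < t)) → t - s = 1)
    {s : ℝ} (h1 : T.min' hT ≤ s) (h2 : s ≤ T.max' hT) :
    ∃ t ∈ T, t ≤ s ∧ s < t + 1 := by
  set a := T.min' hT with ha
  set j := ⌊s - a⌋₊ with hj
  have hfl : (j : ℝ) ≤ s - a := Nat.floor_le (by linarith)
  have hfl2 : s - a < j + 1 := Nat.lt_floor_add_one (s - a)
  exact ⟨a + j, grid_mem T hT hgap j (by linarith), by linarith, by linarith⟩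

noncomputable section

open Set Metric

variable {k : ℕ} {L : ℝ}

/-- `(S, v, e)` is (a realization of) the star with `k` edges of length `L`: the quotient
metric space of `(Fin k) × [0,L]` identifying all points `(i,0)` to the single center
point `v`, so that `S` is covered by the parametrized edges `e i : [0,L] → S` and the
metric is `d(e i s, e j t) = |s - t|` if `i = j` and `= s + t` otherwise. -/
def IsStar {S : Type*} [MetricSpace S] (v : S) (e : Fin k → ℝ → S) (L : ℝ) : Prop :=
  (∀ i : Fin k, e i 0 = v) ∧
  (∀ x : S, ∃ i, ∃ s ∈ Set.Icc (0:ℝ) L, x = e i s) ∧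
  (∀ i j : Fin k, ∀ s ∈ Set.Icc (0:ℝ) L, ∀ t ∈ Set.Icc (0:ℝ) L,
    dist (e i s) (e j t) = if i = j then |s - t| else s + t)

variable {S : Type*} [MetricSpace S] (e : Fin k → ℝ → S)

/-- The `i`-th closed edge of the star. -/
def starEdge (i : Fin k) (L : ℝ) : Set S := (e i) '' Set.Icc (0:ℝ) L

/-- The `i`-th arm of a configuration `c`. -/
def arm (c : Set S) (i : Fin k) (L : ℝ) : Set S := c ∩ starEdge e i L

/-- A configuration `c` in the star is regular if: (1) distinct points of `c` are at
distance `≥ 1`, with distance exactly `1` for points on a common edge with no point of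
`c` strictly between them; and (2) if the center `v` is not in `c`, then every nonempty
arm of `c` is at distance exactly `1` from some point of `c`. -/
def RegularConfig (v : S) (c : Set S) (L : ℝ) : Prop :=
  (∀ x ∈ c, ∀ y ∈ c, x ≠ y → 1 ≤ dist x y) ∧
  (∀ i : Fin k, ∀ s ∈ Set.Icc (0:ℝ) L, ∀ t ∈ Set.Icc (0:ℝ) L,
    e i s ∈ c → e i t ∈ c → s < t →
    (∀ u : ℝ, s < u → u < t → e i u ∉ c) →
    dist (e i s) (e i t) = 1) ∧
  (v ∉ c → ∀ i : Fin k, (arm e c i L).Nonempty →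
    ∃ x ∈ c, Metric.infDist x (arm e c i L) = 1)

/-- For a regular `(n-1)`-point configuration `c` in the star with
`k ≥ 3` edges of length `L ≥ max(1, n-1)` (`n ≥ 2`), for each index `i` there is a unique
point `x` on the `i`-th edge with `x ∉ c` such that `{x} ∪ c` is a regular `n`-point
configuration. -/

theorem unique_insertion_point (hk : 3 ≤ k) (n : ℕ) (hn : 2 ≤ n)
    (hL : max 1 ((n : ℝ) - 1) ≤ L)
    {S : Type*} [MetricSpace S] (v : S) (e : Fin k → ℝ → S) (hstar : IsStar v e L)
    (c : Set S) (hfin : c.Finite) (hcard : c.ncard = n - 1)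
    (hreg : RegularConfig e v c L) (i : Fin k) :
    ∃! x : S, x ∈ starEdge e i L ∧ x ∉ c ∧
      (insert x c).ncard = n ∧ RegularConfig e v (insert x c) L := by
  classical
  obtain ⟨he0, hsurj, hd⟩ := hstar
  have h1L : (1:ℝ) ≤ L := le_trans (le_max_left _ _) hL
  have h0L : (0:ℝ) ≤ L := by linarith
  have hmL : ((n - 1 : ℕ) : ℝ) ≤ L := by
    have h1n : (1:ℕ) ≤ n := by omega
    have : ((n - 1 : ℕ) : ℝ) = (n : ℝ) - 1 := by
      push_cast [Nat.cast_sub h1n]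
      ring
    rw [this]
    exact le_trans (le_max_right _ _) hL
  -- distance helpers
  have hds : ∀ (j : Fin k), ∀ s ∈ Icc (0:ℝ) L, ∀ t ∈ Icc (0:ℝ) L,
      dist (e j s) (e j t) = |s - t| := by
    intro j s hs t ht; rw [hd j j s hs t ht, if_pos rfl]
  have hdn : ∀ (j j' : Fin k), j ≠ j' → ∀ s ∈ Icc (0:ℝ) L, ∀ t ∈ Icc (0:ℝ) L,
      dist (e j s) (e j' t) = s + t := by
    intro j j' hjj s hs t ht; rw [hd j j' s hs t ht, if_neg hjj]
  have hinj : ∀ (j : Fin k), ∀ s ∈ Icc (0:ℝ) L, ∀ t ∈ Icc (0:ℝ) L, e j s = e j t → s = t := by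
    intro j s hs t ht h
    have h2 := hds j s hs t ht
    rw [h, dist_self] at h2
    have h3 := abs_eq_zero.1 h2.symm
    linarith [abs_nonneg (s - t), h3]
  have hcross : ∀ (j j' : Fin k), j ≠ j' → ∀ s ∈ Icc (0:ℝ) L, ∀ t ∈ Icc (0:ℝ) L,
      e j s = e j' t → s = 0 ∧ t = 0 := by
    intro j j' hjj s hs t ht h
    have h2 := hdn j j' hjj s hs t ht
    rw [h, dist_self] at h2
    constructor <;> linarith [hs.1, ht.1]
  have hheight : ∀ (j : Fin k), ∀ u ∈ Icc (0:ℝ) L, dist v (e j u) = u := by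
    intro j u hu
    have h0I : (0:ℝ) ∈ Icc (0:ℝ) L := ⟨le_refl 0, h0L⟩
    rw [← he0 j, hds j 0 h0I u hu, zero_sub, abs_neg, abs_of_nonneg hu.1]
  set T : Fin k → Set ℝ := fun j => {t | t ∈ Icc (0:ℝ) L ∧ e j t ∈ c} with hTdef
  have hTinj : ∀ j, Set.InjOn (e j) (T j) := fun j s hs t ht h => hinj j s hs.1 t ht.1 h
  have hTfin : ∀ j, (T j).Finite := by
    intro j
    apply Set.Finite.of_finite_image _ (hTinj j)
    exact hfin.subset (by rintro _ ⟨t, ht, rfl⟩; exact ht.2)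
  have harm : ∀ (d : Set S) (j : Fin k),
      arm e d j L = e j '' {t | t ∈ Icc (0:ℝ) L ∧ e j t ∈ d} := by
    intro d j
    ext y
    simp only [arm, starEdge, Set.mem_inter_iff, Set.mem_image, Set.mem_setOf_eq]
    constructor
    · rintro ⟨hyd, t, ht, rfl⟩
      exact ⟨t, ⟨ht, hyd⟩, rfl⟩
    · rintro ⟨t, ⟨ht, htd⟩, rfl⟩
      exact ⟨htd, t, ht, rfl⟩
  set F : Fin k → Finset ℝ := fun j => (hTfin j).toFinset with hFdef
  have hFmem : ∀ j t, t ∈ F j ↔ t ∈ T j := fun j t => Set.Finite.mem_toFinset _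
  have hgap : ∀ j : Fin k, ∀ s ∈ F j, ∀ t ∈ F j, s < t →
      (∀ u ∈ F j, ¬(s < u ∧ u < t)) → t - s = 1 := by
    intro j s hs t ht hst hbet
    have hsT := (hFmem j s).1 hs
    have htT := (hFmem j t).1 ht
    have key := hreg.2.1 j s hsT.1 t htT.1 hsT.2 htT.2 hst ?between
    · rw [hds j s hsT.1 t htT.1, abs_sub_comm, abs_of_nonneg (by linarith)] at key
      exact key
    case between =>
      intro u hsu hut hu
      have huI : u ∈ Icc (0:ℝ) L := ⟨le_trans hsT.1.1 (le_of_lt hsu), le_trans (le_of_lt hut) htT.1.2⟩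
      exact hbet u ((hFmem j u).2 ⟨huI, hu⟩) ⟨hsu, hut⟩
  have hcardT : ∀ j, (T j).ncard ≤ n - 1 := by
    intro j
    rw [← hcard]
    exact Set.ncard_le_ncard_of_injOn (e j) (fun t ht => ht.2) (hTinj j) hfin
  have hFcard : ∀ j, (F j).card = (T j).ncard := by
    intro j
    rw [Set.ncard_eq_toFinset_card (T j) (hTfin j)]
  -- the witness lemma (when the center is not in c)
  have hwit : v ∉ c → ∀ j : Fin k, ∀ hne : (F j).Nonempty,
      ∃ (j' : Fin k) (u : ℝ), j' ≠ j ∧ u ∈ T j' ∧ 0 < u ∧ u + (F j).min' hne = 1 := by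
    intro hv j hne
    have hTne : (T j).Nonempty := (Set.Finite.toFinset_nonempty _).1 hne
    have harmne : (arm e c j L).Nonempty := by
      rw [harm c j]
      exact hTne.image _
    obtain ⟨x₀, hx₀c, hx₀d⟩ := hreg.2.2 hv j harmne
    obtain ⟨j', u, hu, rfl⟩ := hsurj x₀
    have huT : u ∈ T j' := ⟨hu, hx₀c⟩
    have hupos : 0 < u := by
      rcases lt_or_eq_of_le hu.1 with h | h
      · exact h
      · exfalso; apply hv; rw [← he0 j', h]; exact hx₀c
    have hj'j : j' ≠ j := by
      intro hh; subst hh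
      have hmem : e j' u ∈ arm e c j' L := by rw [harm]; exact ⟨u, huT, rfl⟩
      rw [Metric.infDist_zero_of_mem hmem] at hx₀d
      norm_num at hx₀d
    have hbT : (F j).min' hne ∈ T j := (hFmem j _).1 ((F j).min'_mem hne)
    have hcomp : Metric.infDist (e j' u) (arm e c j L) = u + (F j).min' hne := by
      apply le_antisymm
      · have hmem : e j ((F j).min' hne) ∈ arm e c j L := by rw [harm]; exact ⟨_, hbT, rfl⟩
        calc Metric.infDist (e j' u) (arm e c j L) ≤ dist (e j' u) (e j ((F j).min' hne)) :=
              Metric.infDist_le_dist_of_mem hmem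
          _ = u + (F j).min' hne := hdn j' j hj'j u hu _ hbT.1
      · apply my_le_infDist harmne
        intro y hy
        rw [harm] at hy
        obtain ⟨t, htT, rfl⟩ := hy
        rw [hdn j' j hj'j u hu t htT.1]
        have : (F j).min' hne ≤ t := (F j).min'_le t ((hFmem j t).2 htT)
        linarith
    exact ⟨j', u, hj'j, huT, hupos, by rw [hcomp] at hx₀d; linarith⟩
  -- generic facts about inserting a point x = e i sx with sx > 0
  have hxrep : ∀ (sx : ℝ), sx ∈ Icc (0:ℝ) L → 0 < sx → ∀ (j : Fin k), ∀ u ∈ Icc (0:ℝ) L,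
      e j u = e i sx → j = i ∧ u = sx := by
    intro sx hsxI hsxpos j u hu h
    by_cases hji : j = i
    · subst hji
      exact ⟨rfl, hinj j u hu sx hsxI h⟩
    · exfalso
      have := (hcross j i hji u hu sx hsxI h).2
      linarith
  have harm_ne : ∀ (sx : ℝ), sx ∈ Icc (0:ℝ) L → 0 < sx → ∀ (j : Fin k), j ≠ i →
      arm e (insert (e i sx) c) j L = arm e c j L := by
    intro sx hsxI hsxpos j hji
    have hnot : e i sx ∉ starEdge e j L := by
      rintro ⟨u, hu, hc⟩
      exact hji (hxrep sx hsxI hsxpos j u hu hc).1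
    show insert (e i sx) c ∩ starEdge e j L = c ∩ starEdge e j L
    exact Set.insert_inter_of_notMem hnot
  have harm_i : ∀ (sx : ℝ), sx ∈ Icc (0:ℝ) L →
      arm e (insert (e i sx) c) i L = insert (e i sx) (arm e c i L) := by
    intro sx hsxI
    have hmem : e i sx ∈ starEdge e i L := ⟨sx, hsxI, rfl⟩
    show insert (e i sx) c ∩ starEdge e i L = insert (e i sx) (c ∩ starEdge e i L)
    exact Set.insert_inter_of_mem hmem
  have hvnotin : ∀ (sx : ℝ), sx ∈ Icc (0:ℝ) L → 0 < sx → v ∉ c → v ∉ insert (e i sx) c := by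
    intro sx hsxI hsxpos hv hmem
    rcases Set.mem_insert_iff.1 hmem with h | h
    · have : (0:ℝ) = sx := hinj i 0 ⟨le_refl 0, h0L⟩ sx hsxI ((he0 i).trans h)
      linarith
    · exact hv h
  by_cases hFine : (F i).Nonempty
  · -- the arm at i is nonempty : insert at the top
    obtain ⟨j₀, hMj₀, hj₀card⟩ := grid_max (F i) hFine (hgap i)
    set a := (F i).min' hFine with ha
    set M := (F i).max' hFine with hM
    have haT : a ∈ T i := (hFmem i a).1 ((F i).min'_mem hFine)
    have hMT : M ∈ T i := (hFmem i M).1 ((F i).max'_mem hFine)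
    have ha0 : 0 ≤ a := haT.1.1
    have haM : a ≤ M := (F i).min'_le M ((F i).max'_mem hFine)
    have ha1 : a < 1 := by
      by_cases hv : v ∈ c
      · have h0T : (0:ℝ) ∈ T i := ⟨⟨le_refl 0, h0L⟩, by rw [he0 i]; exact hv⟩
        have h2 : a ≤ 0 := (F i).min'_le 0 ((hFmem i 0).2 h0T)
        linarith
      · obtain ⟨j', u, hj', huT, hupos, hsum⟩ := hwit hv i hFine
        rw [← ha] at hsum
        linarith
    have hj₀R : (j₀ : ℝ) + 1 ≤ ((T i).ncard : ℝ) := by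
      rw [← hFcard i]; exact_mod_cast hj₀card
    have hMn : M + 1 ≤ ((n - 1 : ℕ) : ℝ) := by
      by_cases hv : v ∈ c
      · have h0T : (0:ℝ) ∈ T i := ⟨⟨le_refl 0, h0L⟩, by rw [he0 i]; exact hv⟩
        have ha0' : a ≤ 0 := (F i).min'_le 0 ((hFmem i 0).2 h0T)
        have hcT : ((T i).ncard : ℝ) ≤ ((n-1:ℕ):ℝ) := by exact_mod_cast hcardT i
        rw [hMj₀]; linarith
      · obtain ⟨j', u, hj', huT, hupos, hsum⟩ := hwit hv i hFine
        have hTpos : ∀ (jj : Fin k), ∀ t ∈ T jj, 0 < t := by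
          intro jj t ht
          rcases lt_or_eq_of_le ht.1.1 with h | h
          · exact h
          · exfalso; apply hv; rw [← he0 jj, h]; exact ht.2
        have hdisj : Disjoint (e i '' T i) (e j' '' T j') := by
          rw [Set.disjoint_left]
          rintro y ⟨t, htT, rfl⟩ ⟨t', ht'T, heq⟩
          have h2 := (hcross j' i hj' t' ht'T.1 t htT.1 heq).2
          exact absurd h2 (ne_of_gt (hTpos i t htT))
        have hsub : (e i '' T i) ∪ (e j' '' T j') ⊆ c := by
          rintro y (⟨t, ht, rfl⟩ | ⟨t, ht, rfl⟩)
          · exact ht.2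
          · exact ht.2
        have hfin1 : (e i '' T i).Finite := (hTfin i).image _
        have hfin2 : (e j' '' T j').Finite := (hTfin j').image _
        have hcount : (T i).ncard + (T j').ncard ≤ n - 1 := by
          rw [← Set.ncard_image_of_injOn (hTinj i), ← Set.ncard_image_of_injOn (hTinj j'),
            ← Set.ncard_union_eq hdisj hfin1 hfin2, ← hcard]
          exact Set.ncard_le_ncard hsub hfin
        have h1T : 1 ≤ (T j').ncard := by
          have hne : (T j').Nonempty := ⟨u, huT⟩
          have := (Set.ncard_pos (hTfin j')).2 hne
          omega
        have hcT : ((T i).ncard : ℝ) + 1 ≤ ((n-1:ℕ):ℝ) := by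
          have h3 : (T i).ncard + 1 ≤ n - 1 := by omega
          exact_mod_cast h3
        rw [hMj₀]; linarith
    set sx := M + 1 with hsx
    have hsxI : sx ∈ Icc (0:ℝ) L := ⟨by linarith, by linarith [hMn, hmL]⟩
    have hsxpos : 0 < sx := by linarith
    have hxc : e i sx ∉ c := by
      intro hmem
      have h2 : sx ∈ T i := ⟨hsxI, hmem⟩
      have h3 := (F i).le_max' sx ((hFmem i sx).2 h2)
      rw [← hM] at h3
      linarith
    have key1 : ∀ y ∈ c, 1 ≤ dist (e i sx) y := by
      intro y hy
      obtain ⟨j, u, hu, rfl⟩ := hsurj y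
      by_cases hji : j = i
      · subst hji
        have huT : u ∈ T j := ⟨hu, hy⟩
        have huM := (F j).le_max' u ((hFmem j u).2 huT)
        rw [← hM] at huM
        rw [dist_comm, hds j u hu sx hsxI, abs_sub_comm, abs_of_nonneg (by linarith)]
        linarith
      · rw [hdn i j (fun h => hji h.symm) sx hsxI u hu]
        linarith [hu.1]
    have hregnew : RegularConfig e v (insert (e i sx) c) L := by
      refine ⟨?_, ?_, ?_⟩
      · intro p hp q hq hpq
        rcases Set.mem_insert_iff.1 hp with rfl | hp'
        · rcases Set.mem_insert_iff.1 hq with rfl | hq'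
          · exact absurd rfl hpq
          · exact key1 q hq'
        · rcases Set.mem_insert_iff.1 hq with rfl | hq'
          · rw [dist_comm]; exact key1 p hp'
          · exact hreg.1 p hp' q hq' hpq
      · intro j s₁ hs₁ t₁ ht₁ hm1 hm2 hlt hbet
        rcases Set.mem_insert_iff.1 hm1 with h1 | h1
        · obtain ⟨hji, hs₁eq⟩ := hxrep sx hsxI hsxpos j s₁ hs₁ h1
          exfalso
          rw [hji] at hm2
          rcases Set.mem_insert_iff.1 hm2 with h2 | h2
          · have := hinj i t₁ ht₁ sx hsxI h2
            rw [hs₁eq, this] at hlt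
            exact lt_irrefl _ hlt
          · have h3 : t₁ ∈ T i := ⟨ht₁, h2⟩
            have h4 := (F i).le_max' t₁ ((hFmem i t₁).2 h3)
            rw [← hM] at h4
            rw [hs₁eq] at hlt
            linarith
        · rcases Set.mem_insert_iff.1 hm2 with h2 | h2
          · obtain ⟨hji, ht₁eq⟩ := hxrep sx hsxI hsxpos j t₁ ht₁ h2
            rw [hji] at h1 hbet ⊢
            rw [ht₁eq] at hlt ht₁ hbet ⊢
            have hs₁T : s₁ ∈ T i := ⟨hs₁, h1⟩
            have hs₁M := (F i).le_max' s₁ ((hFmem i s₁).2 hs₁T)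
            rw [← hM] at hs₁M
            have hs₁eq : s₁ = M := by
              by_contra hne
              have hlt2 : s₁ < M := lt_of_le_of_ne hs₁M hne
              exact hbet M hlt2 (by linarith) (Set.mem_insert_of_mem _ hMT.2)
            rw [hds i s₁ hs₁ sx hsxI, abs_sub_comm, abs_of_nonneg (by linarith), hs₁eq]
            ring
          · apply hreg.2.1 j s₁ hs₁ t₁ ht₁ h1 h2 hlt
            intro u hsu hut hu
            exact hbet u hsu hut (Set.mem_insert_of_mem _ hu)
      · intro hv' j hjne
        have hv : v ∉ c := fun hvc => hv' (Set.mem_insert_of_mem _ hvc)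
        by_cases hji : j = i
        · rw [hji]
          have harmne : (arm e c i L).Nonempty := by
            rw [harm c i]
            exact ((Set.Finite.toFinset_nonempty _).1 hFine).image _
          obtain ⟨x₀, hx₀c, hx₀d⟩ := hreg.2.2 hv i harmne
          refine ⟨x₀, Set.mem_insert_of_mem _ hx₀c, ?_⟩
          rw [harm_i sx hsxI]
          apply le_antisymm
          · calc Metric.infDist x₀ (insert (e i sx) (arm e c i L))
                ≤ Metric.infDist x₀ (arm e c i L) :=
                  Metric.infDist_le_infDist_of_subset (Set.subset_insert _ _) harmne
            _ = 1 := hx₀d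
          · apply my_le_infDist (Set.insert_nonempty _ _)
            intro y hy
            rcases Set.mem_insert_iff.1 hy with rfl | hy'
            · rw [dist_comm]; exact key1 x₀ hx₀c
            · calc (1:ℝ) = Metric.infDist x₀ (arm e c i L) := hx₀d.symm
                _ ≤ dist x₀ y := Metric.infDist_le_dist_of_mem hy'
        · rw [harm_ne sx hsxI hsxpos j hji] at hjne ⊢
          obtain ⟨x₀, hx₀c, hx₀d⟩ := hreg.2.2 hv j hjne
          exact ⟨x₀, Set.mem_insert_of_mem _ hx₀c, hx₀d⟩
    have hncard : (insert (e i sx) c).ncard = n := by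
      rw [Set.ncard_insert_of_notMem hxc hfin, hcard]
      omega
    refine ⟨e i sx, ⟨⟨sx, hsxI, rfl⟩, hxc, hncard, hregnew⟩, ?_⟩
    rintro x' ⟨⟨s', hs', rfl⟩, hx'c, hcard', hreg''⟩
    have hs'T : s' ∉ T i := fun h => hx'c h.2
    have hgoal : s' = sx := by
      by_cases hlow : s' < a
      · exfalso
        have hne : e i s' ≠ e i a := by
          intro h
          exact hs'T (by rw [hinj i s' hs' a haT.1 h]; exact haT)
        have h1 := hreg''.1 (e i s') (Set.mem_insert _ _) (e i a)
          (Set.mem_insert_of_mem _ haT.2) hne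
        rw [hds i s' hs' a haT.1, abs_sub_comm, abs_of_nonneg (by linarith)] at h1
        linarith [hs'.1]
      · push_neg at hlow
        by_cases hhigh : s' ≤ M
        · exfalso
          obtain ⟨t, htF, hts, hst1⟩ := grid_near (F i) hFine (hgap i) hlow hhigh
          have htT : t ∈ T i := (hFmem i t).1 htF
          have hne : e i s' ≠ e i t := by
            intro h
            exact hs'T (by rw [hinj i s' hs' t htT.1 h]; exact htT)
          have h1 := hreg''.1 (e i s') (Set.mem_insert _ _) (e i t)
            (Set.mem_insert_of_mem _ htT.2) hne
          rw [hds i s' hs' t htT.1, abs_of_nonneg (by linarith)] at h1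
          linarith
        · push_neg at hhigh
          have hbetw : ∀ u : ℝ, M < u → u < s' → e i u ∉ insert (e i s') c := by
            intro u hMu hus' hu
            have huI : u ∈ Icc (0:ℝ) L := ⟨by linarith [hMT.1.1], by linarith [hs'.2]⟩
            rcases Set.mem_insert_iff.1 hu with h | h
            · have := hinj i u huI s' hs' h
              linarith
            · have h2 : u ∈ T i := ⟨huI, h⟩
              have h3 := (F i).le_max' u ((hFmem i u).2 h2)
              rw [← hM] at h3
              linarith
          have h2 := hreg''.2.1 i M hMT.1 s' hs'
            (Set.mem_insert_of_mem _ hMT.2) (Set.mem_insert _ _) hhigh hbetw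
          rw [hds i M hMT.1 s' hs', abs_sub_comm, abs_of_nonneg (by linarith)] at h2
          linarith
    rw [hgoal]
  · -- the arm at i is empty : insert at 1 - β
    have hTiE : T i = ∅ := by
      rw [← Set.not_nonempty_iff_eq_empty]
      intro h
      exact hFine ((Set.Finite.toFinset_nonempty _).2 h)
    have hv : v ∉ c := by
      intro hvc
      have h2 : (0:ℝ) ∈ T i := ⟨⟨le_refl 0, h0L⟩, by rw [he0 i]; exact hvc⟩
      rw [hTiE] at h2
      exact h2
    have hcne : c.Nonempty := by
      have h2 : 0 < c.ncard := by rw [hcard]; omega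
      exact (Set.ncard_pos hfin).1 h2
    obtain ⟨y₀, hy₀c, hy₀min⟩ := Set.exists_min_image c (dist v) hfin hcne
    obtain ⟨j₀, β, hβI, hy₀eq⟩ := hsurj y₀
    subst hy₀eq
    have hβh : dist v (e j₀ β) = β := hheight j₀ β hβI
    have hmin : ∀ y ∈ c, β ≤ dist v y := by
      intro y hy
      have h2 := hy₀min y hy
      rwa [hβh] at h2
    have hβT : β ∈ T j₀ := ⟨hβI, hy₀c⟩
    have hj₀i : j₀ ≠ i := by
      intro h; subst h
      rw [hTiE] at hβT; exact hβT
    have hβpos : 0 < β := by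
      rcases lt_or_eq_of_le hβI.1 with h | h
      · exact h
      · exfalso; apply hv; rw [← he0 j₀, h]; exact hy₀c
    have hFj₀ne : (F j₀).Nonempty := ⟨β, (hFmem j₀ β).2 hβT⟩
    obtain ⟨j', u, hj', huT, hupos, hsum⟩ := hwit hv j₀ hFj₀ne
    have hbmin : (F j₀).min' hFj₀ne ∈ T j₀ := (hFmem j₀ _).1 ((F j₀).min'_mem hFj₀ne)
    have hβbmin : β ≤ (F j₀).min' hFj₀ne := by
      have h2 := hmin (e j₀ ((F j₀).min' hFj₀ne)) hbmin.2
      rwa [hheight j₀ _ hbmin.1] at h2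
    have hβ1 : β < 1 := by linarith
    set sx := 1 - β with hsx
    have hsxI : sx ∈ Icc (0:ℝ) L := ⟨by linarith, by linarith⟩
    have hsxpos : 0 < sx := by linarith
    have hxc : e i sx ∉ c := by
      intro hmem
      have h2 : sx ∈ T i := ⟨hsxI, hmem⟩
      rw [hTiE] at h2; exact h2
    have harmE : arm e c i L = (∅ : Set S) := by
      rw [harm c i]
      have h2 : {t | t ∈ Icc (0:ℝ) L ∧ e i t ∈ c} = (∅ : Set ℝ) := hTiE
      rw [h2]
      simp
    have key1 : ∀ y ∈ c, 1 ≤ dist (e i sx) y := by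
      intro y hy
      obtain ⟨j, u', hu', rfl⟩ := hsurj y
      by_cases hji : j = i
      · exfalso; subst hji
        have h2 : u' ∈ T j := ⟨hu', hy⟩
        rw [hTiE] at h2; exact h2
      · rw [hdn i j (fun h => hji h.symm) sx hsxI u' hu']
        have h2 := hmin _ hy
        rw [hheight j u' hu'] at h2
        linarith
    have hregnew : RegularConfig e v (insert (e i sx) c) L := by
      refine ⟨?_, ?_, ?_⟩
      · intro p hp q hq hpq
        rcases Set.mem_insert_iff.1 hp with rfl | hp'
        · rcases Set.mem_insert_iff.1 hq with rfl | hq'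
          · exact absurd rfl hpq
          · exact key1 q hq'
        · rcases Set.mem_insert_iff.1 hq with rfl | hq'
          · rw [dist_comm]; exact key1 p hp'
          · exact hreg.1 p hp' q hq' hpq
      · intro j s₁ hs₁ t₁ ht₁ hm1 hm2 hlt hbet
        rcases Set.mem_insert_iff.1 hm1 with h1 | h1
        · obtain ⟨hji, hs₁eq⟩ := hxrep sx hsxI hsxpos j s₁ hs₁ h1
          exfalso
          rw [hji] at hm2
          rcases Set.mem_insert_iff.1 hm2 with h2 | h2
          · have := hinj i t₁ ht₁ sx hsxI h2
            rw [hs₁eq, this] at hlt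
            exact lt_irrefl _ hlt
          · have h3 : t₁ ∈ T i := ⟨ht₁, h2⟩
            rw [hTiE] at h3; exact h3
        · rcases Set.mem_insert_iff.1 hm2 with h2 | h2
          · obtain ⟨hji, ht₁eq⟩ := hxrep sx hsxI hsxpos j t₁ ht₁ h2
            exfalso
            rw [hji] at h1
            have h3 : s₁ ∈ T i := ⟨hs₁, h1⟩
            rw [hTiE] at h3; exact h3
          · apply hreg.2.1 j s₁ hs₁ t₁ ht₁ h1 h2 hlt
            intro u₂ hsu hut hu
            exact hbet u₂ hsu hut (Set.mem_insert_of_mem _ hu)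
      · intro hv' j hjne
        by_cases hji : j = i
        · rw [hji]
          refine ⟨e j₀ β, Set.mem_insert_of_mem _ hy₀c, ?_⟩
          rw [harm_i sx hsxI, harmE]
          rw [insert_empty_eq]
          rw [Metric.infDist_singleton, dist_comm, hdn i j₀ (fun h => hj₀i h.symm) sx hsxI β hβI]
          rw [hsx]; ring
        · rw [harm_ne sx hsxI hsxpos j hji] at hjne ⊢
          have hv2 : v ∉ c := hv
          obtain ⟨x₀, hx₀c, hx₀d⟩ := hreg.2.2 hv2 j hjne
          exact ⟨x₀, Set.mem_insert_of_mem _ hx₀c, hx₀d⟩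
    have hncard : (insert (e i sx) c).ncard = n := by
      rw [Set.ncard_insert_of_notMem hxc hfin, hcard]
      omega
    refine ⟨e i sx, ⟨⟨sx, hsxI, rfl⟩, hxc, hncard, hregnew⟩, ?_⟩
    rintro x' ⟨⟨s', hs', rfl⟩, hx'c, hcard', hreg''⟩
    have hs'pos : 0 < s' := by
      rcases lt_or_eq_of_le hs'.1 with h | h
      · exact h
      · exfalso
        have hbm1 : (F j₀).min' hFj₀ne < 1 := by linarith
        have hbmpos : 0 < (F j₀).min' hFj₀ne := by linarith
        have hm1 : e j₀ 0 ∈ insert (e i s') c := by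
          apply Set.mem_insert_iff.2; left
          rw [he0 j₀, ← he0 i, h]
        have hbetw : ∀ u₂ : ℝ, 0 < u₂ → u₂ < (F j₀).min' hFj₀ne →
            e j₀ u₂ ∉ insert (e i s') c := by
          intro u₂ h1 h2 hu
          have huI : u₂ ∈ Icc (0:ℝ) L := ⟨le_of_lt h1, by linarith [hbmin.1.2]⟩
          rcases Set.mem_insert_iff.1 hu with hh | hh
          · have h3 : e j₀ u₂ = e j₀ 0 := by rw [hh, ← h, he0 i, ← he0 j₀]
            have := hinj j₀ u₂ huI 0 ⟨le_refl 0, h0L⟩ h3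
            linarith
          · have h3 : u₂ ∈ T j₀ := ⟨huI, hh⟩
            have h4 := (F j₀).min'_le u₂ ((hFmem j₀ u₂).2 h3)
            linarith
        have h2 := hreg''.2.1 j₀ 0 ⟨le_refl 0, h0L⟩ ((F j₀).min' hFj₀ne) hbmin.1
          hm1 (Set.mem_insert_of_mem _ hbmin.2) hbmpos hbetw
        rw [hds j₀ 0 ⟨le_refl 0, h0L⟩ _ hbmin.1, zero_sub, abs_neg,
          abs_of_nonneg (le_of_lt hbmpos)] at h2
        linarith
    have hvnot'' : v ∉ insert (e i s') c := hvnotin s' hs' hs'pos hv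
    have harmS : arm e (insert (e i s') c) i L = {e i s'} := by
      rw [harm_i s' hs', harmE, insert_empty_eq]
    obtain ⟨y, hy, hyd⟩ := hreg''.2.2 hvnot'' i (by rw [harmS]; exact ⟨_, rfl⟩)
    rw [harmS, Metric.infDist_singleton] at hyd
    rcases Set.mem_insert_iff.1 hy with h | h
    · rw [h, dist_self] at hyd; norm_num at hyd
    · obtain ⟨j, u', hu', rfl⟩ := hsurj y
      have hji : j ≠ i := by
        intro hh; subst hh
        have h2 : u' ∈ T j := ⟨hu', h⟩
        rw [hTiE] at h2; exact h2
      rw [hdn j i hji u' hu' s' hs'] at hyd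
      have hu'β : β ≤ u' := by
        have h2 := hmin _ h
        rwa [hheight j u' hu'] at h2
      have hlow : 1 ≤ dist (e i s') (e j₀ β) := by
        apply hreg''.1 _ (Set.mem_insert _ _) _ (Set.mem_insert_of_mem _ hy₀c)
        intro hh
        exact hx'c (by rw [hh]; exact hy₀c)
      rw [hdn i j₀ (fun hh => hj₀i hh.symm) s' hs' β hβI] at hlow
      have hfinal : s' = sx := by rw [hsx]; linarith
      rw [hfinal]

end
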